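/- The function g : [0, 1/4] → ℝ defined by g(s) = h((1 − √(1 − 4s))/2), where h is the binary entropy function, is concave. Equivalently, the binary entropy h(t) is a concave function of the variance t(1−t) for t ∈ [0, 1/2]. -/

import Mathlib

open Real Set in
private lemma key17 (u : ℝ) (hu : 1 < u) : 2 * Real.log u < u - 1/u := by
  have h0 : 0 < u := by linarith
  have hl : 0 < Real.log u := Real.log_pos hu
  have h := (Real.self_lt_sinh_iff (x := Real.log u)).2 hl
  rw [Real.sinh_eq, Real.exp_log h0, Real.exp_neg, Real.exp_log h0] at h
  have hinv : u⁻¹ = 1/u := by ring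
  linarith [h]

noncomputable def Phi17 (r : ℝ) : ℝ := (Real.log (1 + r) - Real.log (1 - r)) / r

open Real Set in
private lemma phi17_deriv {r : ℝ} (hr : r ∈ Ioo (0:ℝ) 1) :
    HasDerivAt Phi17 (((1/(1+r) + 1/(1-r)) * r - (Real.log (1+r) - Real.log (1-r))) / r^2) r := by
  obtain ⟨h0, h1⟩ := hr
  have h1p : (0:ℝ) < 1 + r := by linarith
  have h1m : (0:ℝ) < 1 - r := by linarith
  have hA : HasDerivAt (fun s : ℝ => Real.log (1 + s)) (1/(1+r)) r := by
    have := ((hasDerivAt_id r).const_add 1).log h1p.ne'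
    simpa using this
  have hB : HasDerivAt (fun s : ℝ => Real.log (1 - s)) (-(1/(1-r))) r := by
    have := ((hasDerivAt_id r).const_sub 1).log h1m.ne'
    simp only [id] at this
    convert this using 1
    field_simp
  have hN : HasDerivAt (fun s : ℝ => Real.log (1 + s) - Real.log (1 - s))
      (1/(1+r) + 1/(1-r)) r := by
    simpa [sub_neg_eq_add] using hA.fun_sub hB
  have := hN.fun_div (hasDerivAt_id r) h0.ne'
  have e : Phi17 = fun y => (Real.log (1 + y) - Real.log (1 - y)) / y := rfl
  rw [e]
  simpa using this

open Real Set in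
private lemma phi17_mono : StrictMonoOn Phi17 (Ioo (0:ℝ) 1) := by
  apply strictMonoOn_of_deriv_pos (convex_Ioo 0 1)
  · intro r hr
    exact ((phi17_deriv hr).continuousAt).continuousWithinAt
  · rw [interior_Ioo]
    intro r hr
    rw [(phi17_deriv hr).deriv]
    obtain ⟨h0, h1⟩ := hr
    have h1p : (0:ℝ) < 1 + r := by linarith
    have h1m : (0:ℝ) < 1 - r := by linarith
    set u := (1+r)/(1-r) with hu
    have hu1 : 1 < u := by rw [hu, lt_div_iff₀ h1m]; linarith
    have hk := key17 u hu1
    have hlog : Real.log u = Real.log (1+r) - Real.log (1-r) :=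
      Real.log_div h1p.ne' h1m.ne'
    have huval : u - 1/u = 4*r/((1+r)*(1-r)) := by
      rw [hu]; field_simp; ring
    rw [huval, hlog] at hk
    have hnum : Real.log (1+r) - Real.log (1-r) < (1/(1+r) + 1/(1-r)) * r := by
      have e : 4*r/((1+r)*(1-r)) = 2*((1/(1+r) + 1/(1-r)) * r) := by
        field_simp
        ring
      rw [e] at hk
      linarith
    have hr2 : (0:ℝ) < r^2 := by positivity
    exact div_pos (by linarith) hr2

noncomputable def binEnt (t : ℝ) : ℝ :=
  -(t * Real.logb 2 t) - (1 - t) * Real.logb 2 (1 - t)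

open Real Set in
private lemma binEnt_eq17 (t : ℝ) :
    binEnt t = (-(t * Real.log t) - (1 - t) * Real.log (1 - t)) / Real.log 2 := by
  unfold binEnt Real.logb
  ring

open Real Set in
private lemma binEnt_deriv17 {t : ℝ} (h0 : 0 < t) (h1 : t < 1) :
    HasDerivAt binEnt ((Real.log (1 - t) - Real.log t) / Real.log 2) t := by
  have h1t : (0:ℝ) < 1 - t := by linarith
  have hA : HasDerivAt (fun x : ℝ => x * Real.log x) (Real.log t + 1) t :=
    Real.hasDerivAt_mul_log h0.ne'
  have hin : HasDerivAt (fun x : ℝ => 1 - x) (-1) t := (hasDerivAt_id t).const_sub 1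
  have hB : HasDerivAt (fun x : ℝ => (1 - x) * Real.log (1 - x))
      ((Real.log (1 - t) + 1) * (-1)) t :=
    (Real.hasDerivAt_mul_log h1t.ne').comp t hin
  have h := ((hA.fun_neg.fun_sub hB).div_const (Real.log 2))
  have he : (fun x : ℝ => (-(x * Real.log x) - (1 - x) * Real.log (1 - x)) / Real.log 2)
      = binEnt := by
    funext x; rw [binEnt_eq17]
  rw [he] at h
  refine h.congr_deriv ?_
  ring

open Real Set in
private lemma f_deriv17 {s : ℝ} (hs : s ∈ Ioo (0:ℝ) (1/4)) :
    HasDerivAt (fun s => binEnt ((1 - Real.sqrt (1 - 4 * s)) / 2))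
      (Phi17 (Real.sqrt (1 - 4 * s)) / Real.log 2) s := by
  obtain ⟨hs0, hs1⟩ := hs
  have hx : (0:ℝ) < 1 - 4 * s := by linarith
  set r := Real.sqrt (1 - 4 * s) with hrdef
  have hr0 : 0 < r := Real.sqrt_pos.2 hx
  have hr1 : r < 1 := by
    have h := Real.sqrt_lt_sqrt hx.le (show (1:ℝ) - 4 * s < 1 by linarith)
    simpa [hrdef] using h
  have hin : HasDerivAt (fun s : ℝ => 1 - 4 * s) (-4) s := by
    simpa using ((hasDerivAt_id s).const_mul 4).const_sub 1
  have hsqrt : HasDerivAt (fun s : ℝ => Real.sqrt (1 - 4 * s)) (1 / (2 * r) * (-4)) s :=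
    (Real.hasDerivAt_sqrt hx.ne').comp s hin
  have hT : HasDerivAt (fun s : ℝ => (1 - Real.sqrt (1 - 4 * s)) / 2) (1 / r) s := by
    have := (hsqrt.const_sub 1).div_const 2
    refine this.congr_deriv ?_
    field_simp
    ring
  set t := (1 - r) / 2 with htdef
  have ht0 : 0 < t := by rw [htdef]; linarith
  have ht1 : t < 1 := by rw [htdef]; linarith
  have hB := (binEnt_deriv17 ht0 ht1).comp s hT
  refine hB.congr_deriv ?_
  have h1t : 1 - t = (1 + r) / 2 := by rw [htdef]; ring
  have hlog1 : Real.log (1 - t) = Real.log (1 + r) - Real.log 2 := by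
    rw [h1t, Real.log_div (by linarith) two_ne_zero]
  have hlog2 : Real.log t = Real.log (1 - r) - Real.log 2 := by
    rw [htdef, Real.log_div (by linarith) two_ne_zero]
  rw [Phi17, hlog1, hlog2]
  ring

theorem stmt17 :
    ConcaveOn ℝ (Set.Icc (0 : ℝ) (1 / 4))
      (fun s => binEnt ((1 - Real.sqrt (1 - 4 * s)) / 2)) := by
  have hint : interior (Set.Icc (0 : ℝ) (1/4)) = Set.Ioo (0:ℝ) (1/4) := by
    rw [interior_Icc]
  apply AntitoneOn.concaveOn_of_deriv (convex_Icc 0 (1/4))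
  · -- continuity
    have hT : Continuous (fun s : ℝ => (1 - Real.sqrt (1 - 4 * s)) / 2) := by
      fun_prop
    have : Continuous (fun s : ℝ => binEnt ((1 - Real.sqrt (1 - 4 * s)) / 2)) := by
      have he : (fun s : ℝ => binEnt ((1 - Real.sqrt (1 - 4 * s)) / 2))
          = fun s : ℝ =>
            (-(((1 - Real.sqrt (1 - 4 * s)) / 2) * Real.log ((1 - Real.sqrt (1 - 4 * s)) / 2))
              - (1 - (1 - Real.sqrt (1 - 4 * s)) / 2)
                * Real.log (1 - (1 - Real.sqrt (1 - 4 * s)) / 2)) / Real.log 2 := by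
        funext s; rw [binEnt_eq17]
      rw [he]
      apply Continuous.div_const
      exact ((Real.continuous_mul_log.comp hT).neg.sub
        (Real.continuous_mul_log.comp (continuous_const.sub hT)))
    exact this.continuousOn
  · rw [hint]
    intro s hs
    exact (f_deriv17 hs).differentiableAt.differentiableWithinAt
  · rw [hint]
    intro s1 hs1 s2 hs2 hle
    rw [(f_deriv17 hs1).deriv, (f_deriv17 hs2).deriv]
    have hl2 : (0:ℝ) < Real.log 2 := Real.log_pos (by norm_num)
    have hx1 : (0:ℝ) < 1 - 4 * s1 := by
      have := hs1.2; linarith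
    have hm1 : Real.sqrt (1 - 4 * s1) ∈ Set.Ioo (0:ℝ) 1 := by
      constructor
      · exact Real.sqrt_pos.2 hx1
      · have h := Real.sqrt_lt_sqrt hx1.le (show (1:ℝ) - 4 * s1 < 1 by have := hs1.1; linarith)
        simpa using h
    have hx2 : (0:ℝ) < 1 - 4 * s2 := by
      have := hs2.2; linarith
    have hm2 : Real.sqrt (1 - 4 * s2) ∈ Set.Ioo (0:ℝ) 1 := by
      constructor
      · exact Real.sqrt_pos.2 hx2
      · have h := Real.sqrt_lt_sqrt hx2.le (show (1:ℝ) - 4 * s2 < 1 by have := hs2.1; linarith)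
        simpa using h
    have hr : Real.sqrt (1 - 4 * s2) ≤ Real.sqrt (1 - 4 * s1) :=
      Real.sqrt_le_sqrt (by linarith)
    have hphi : Phi17 (Real.sqrt (1 - 4 * s2)) ≤ Phi17 (Real.sqrt (1 - 4 * s1)) :=
      phi17_mono.monotoneOn hm2 hm1 hr
    exact div_le_div_of_nonneg_right hphi hl2.le
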